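/- Let Λ and B be real positive semidefinite d×d matrices with B ⪯ Λ in the Loewner order, and let S be any real symmetric d×d matrix. Then tr(S·B·S·B) ≤ tr(S·Λ·S·Λ). -/

import Mathlib

open Matrix

lemma trace_nonneg_of_posSemidef {d : ℕ} {A : Matrix (Fin d) (Fin d) ℝ}
    (hA : A.PosSemidef) : 0 ≤ A.trace := by
  rw [Matrix.trace]
  apply Finset.sum_nonneg
  intro i _
  have := hA.dotProduct_mulVec_nonneg (Pi.single i 1)
  simpa [Matrix.mulVec_single, dotProduct, Pi.single_apply] using this

lemma trace_mul_nonneg {d : ℕ} {A M : Matrix (Fin d) (Fin d) ℝ}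
    (hA : A.PosSemidef) (hM : M.PosSemidef) : 0 ≤ (A * M).trace := by
  obtain ⟨B, rfl⟩ : ∃ B : Matrix (Fin d) (Fin d) ℝ, A = Bᴴ * B := by
    open scoped MatrixOrder Matrix.Norms.L2Operator in
    exact CStarAlgebra.nonneg_iff_eq_star_mul_self.mp hA.nonneg
  have h : (Bᴴ * B * M).trace = (B * M * Bᴴ).trace := by
    rw [Matrix.mul_assoc, Matrix.trace_mul_comm, Matrix.mul_assoc]
  rw [h]
  exact trace_nonneg_of_posSemidef (hM.mul_mul_conjTranspose_same B)

/-- If `Λ` and `B` are real positive semidefinite matrices with `B ⪯ Λ` in the Loewner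
order and `S` is any real symmetric matrix, then `tr(S·B·S·B) ≤ tr(S·Λ·S·Λ)`. -/
theorem chained_trace_estimate {d : ℕ} (Λ B S : Matrix (Fin d) (Fin d) ℝ)
    (hΛ : Λ.PosSemidef) (hB : B.PosSemidef) (hBΛ : (Λ - B).PosSemidef)
    (hS : Sᵀ = S) :
    (S * B * S * B).trace ≤ (S * Λ * S * Λ).trace := by
  have hSH : Sᴴ = S := hS
  have hSBS : (S * B * S).PosSemidef := by
    have := hB.mul_mul_conjTranspose_same S
    rwa [hSH] at this
  have hSΛS : (S * Λ * S).PosSemidef := by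
    have := hΛ.mul_mul_conjTranspose_same S
    rwa [hSH] at this
  have h1 : 0 ≤ (S * B * S * (Λ - B)).trace := trace_mul_nonneg hSBS hBΛ
  have h2 : 0 ≤ (S * Λ * S * (Λ - B)).trace := trace_mul_nonneg hSΛS hBΛ
  have hBT : Bᵀ = B := hB.isHermitian.eq
  have hΛT : Λᵀ = Λ := hΛ.isHermitian.eq
  have key : (S * B * S * Λ).trace = (S * Λ * S * B).trace := by
    have h0 : (S * B * S * Λ).trace = ((S * B * S * Λ)ᵀ).trace := (Matrix.trace_transpose _).symm
    rw [h0]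
    simp only [Matrix.transpose_mul, hS, hBT, hΛT]
    rw [show Λ * (S * (B * S)) = (Λ * S * B) * S by noncomm_ring,
      Matrix.trace_mul_comm, show S * (Λ * S * B) = S * Λ * S * B by noncomm_ring]
  rw [Matrix.mul_sub, Matrix.trace_sub] at h1 h2
  linarith
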